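/- arXiv:1012.4954 — 2 statements merged into one kernel-verified Lean document; each statement's English description precedes it below -/
import Mathlib

section
/- For every infinite set x ⊆ m^{<ω} there exists an infinite subset x' ⊆ x such that x' is a (u,v)-comb for some pair (u,v) ∈ m × m. -/
open Classical

/-! ### Gaps on countable sets -/

/-- `a ⊆* b` : `a` is almost contained in `b`. -/
def AlmostSubset {N : Type} (a b : Set N) : Prop := (a \ b).Finite

/-- An ideal on `N`: nonempty, closed under finite unions and subsets, and
containing all finite sets. -/
def IsIdealOn {N : Type} (I : Set (Set N)) : Prop :=
  I.Nonempty ∧ (∀ a ∈ I, ∀ b ∈ I, a ∪ b ∈ I) ∧ (∀ a ∈ I, ∀ b, b ⊆ a → b ∈ I) ∧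
    ∀ a : Set N, a.Finite → a ∈ I

/-- The orthogonal `I^⊥` of a family of sets. -/
def perp {N : Type} (I : Set (Set N)) : Set (Set N) := {a | ∀ b ∈ I, (a ∩ b).Finite}

/-- `a ≥ I` : every member of `I` is almost contained in `a`. -/
def AboveIdeal {N : Type} (a : Set N) (I : Set (Set N)) : Prop := ∀ b ∈ I, (b \ a).Finite

/-- A family of ideals indexed by `ι` forms a multiple gap. -/
def IsGapFam {ι N : Type} (Γ : ι → Set (Set N)) : Prop :=
  (∀ i, IsIdealOn (Γ i)) ∧
  (∀ i j, i ≠ j → ∀ a ∈ Γ i, ∀ b ∈ Γ j, (a ∩ b).Finite) ∧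
  ∀ a : ι → Set N, (∀ i, AboveIdeal (a i) (Γ i)) → (⋂ i, a i).Infinite

/-- Weak countable separation of a family of ideals. -/
def WeaklyCountablySeparated {ι N : Type} (Γ : ι → Set (Set N)) : Prop :=
  ∃ C : Set (Set N), C.Countable ∧ (∀ c ∈ C, c.Infinite) ∧
    ∀ x : ι → Set N, (∀ i, x i ∈ Γ i) →
      ∃ c : ι → Set N, (∀ i, c i ∈ C) ∧ (∀ i, AlmostSubset (x i) (c i)) ∧ (⋂ i, c i).Finite

/-- A strong multiple gap: a gap which is not weakly countably separated. -/
def IsStrongGapFam {ι N : Type} (Γ : ι → Set (Set N)) : Prop :=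
  IsGapFam Γ ∧ ¬ WeaklyCountablySeparated Γ

/-- The identification of the Cantor space `N → Bool` with `𝒫(N)`. -/
def setOfFun {N : Type} (f : N → Bool) : Set N := {x | f x = true}

/-- A family of subsets of `N` is analytic if the corresponding subset of the
Cantor space `N → Bool` is an analytic set. -/
def IsAnalyticFamily {N : Type} (I : Set (Set N)) : Prop :=
  MeasureTheory.AnalyticSet (setOfFun ⁻¹' I)

/-- A family of subsets of `N` is Souslin measurable if the corresponding subset of
the Cantor space belongs to the σ-algebra generated by the analytic sets. -/
def SouslinMeasurableFamily {N : Type} (S : Set (Set N)) : Prop :=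
  @MeasurableSet _ (MeasurableSpace.generateFrom
    {A : Set (N → Bool) | MeasureTheory.AnalyticSet A}) (setOfFun ⁻¹' S)

/-- An analytic strong `n`-gap. -/
def IsAnalyticStrongGap {N : Type} (n : ℕ) (Γ : Fin n → Set (Set N)) : Prop :=
  IsStrongGapFam Γ ∧ ∀ i, IsAnalyticFamily (Γ i)

/-- `Γ ≤ Γ'` for `n`-gaps. -/
def GapLE {N N' : Type} {n : ℕ} (Γ : Fin n → Set (Set N)) (Γ' : Fin n → Set (Set N')) : Prop :=
  ∃ φ : N → N', Function.Injective φ ∧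
    (∀ i, ∀ x ∈ Γ i, φ '' x ∈ Γ' i) ∧
    ∀ x ∈ perp (⋃ i, Γ i), φ '' x ∈ perp (⋃ i, Γ' i)

/-- A minimal analytic strong `n`-gap. -/
def IsMinimalStrongGap {N : Type} (n : ℕ) (Γ : Fin n → Set (Set N)) : Prop :=
  IsAnalyticStrongGap n Γ ∧
  ∀ (N' : Type) [Countable N'] (Γ' : Fin n → Set (Set N')),
    IsAnalyticStrongGap n Γ' → GapLE Γ' Γ → GapLE Γ Γ'

/-! ### Trees, chains and combs -/

/-- A `u`-chain in the tree `ι^{<ω}`. -/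
def IsUChain {ι : Type} (u : ι) (x : Set (List ι)) : Prop :=
  ∃ s : ℕ → List ι, x = Set.range s ∧ ∀ k, (s k ++ [u]) <+: s (k + 1)

/-- A `(u,v)`-comb in the tree `ι^{<ω}`; a `(u,u)`-comb is by convention a `u`-chain. -/
def IsComb {ι : Type} (u v : ι) (x : Set (List ι)) : Prop :=
  (u = v ∧ IsUChain u x) ∨
  (u ≠ v ∧ ∃ t s : ℕ → List ι, x = Set.range t ∧
    (∀ k, (s k ++ [u]) <+: s (k + 1)) ∧
    (∀ k, (s k ++ [v]) <+: t k) ∧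
    ∀ k, (t k).length < (s (k + 1)).length)

/-- The ideal `Γ_f(i)` on `ι^{<ω}` generated by all `(u,v)`-combs with `f(u,v) = i`
(`none` plays the role of `∞`): all sets almost covered by finitely many such combs. -/
def combIdeal {ι : Type} {n : ℕ} (f : ι × ι → Option (Fin n)) (i : Option (Fin n)) :
    Set (Set (List ι)) :=
  {a | ∃ F : Finset (Set (List ι)),
      (∀ c ∈ F, ∃ u v, f (u, v) = i ∧ IsComb u v c) ∧
      (a \ ⋃ c ∈ F, c).Finite}

/-- The multiple gap `Γ_f` associated to `f : ι × ι → n ∪ {∞}`. -/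
def GammaF {ι : Type} {n : ℕ} (f : ι × ι → Option (Fin n)) : Fin n → Set (Set (List ι)) :=
  fun i => combIdeal f (some i)

/-- `Inc s t p` : `inc(s,t) = p` (for `s ≠ t`). -/
def Inc {ι : Type} (s t : List ι) (p : ι × ι) : Prop :=
  (p.1 = p.2 ∧ ((s ++ [p.1]) <+: t ∨ (t ++ [p.1]) <+: s)) ∨
  (p.1 ≠ p.2 ∧ ∃ r : List ι, (r ++ [p.1]) <+: s ∧ (r ++ [p.2]) <+: t)

/-- A reduction map `ε : ι₀² → ι₁²`. -/
def IsReductionMap {ι₀ ι₁ : Type} (ε : ι₀ × ι₀ → ι₁ × ι₁) : Prop :=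
  ∃ (k : ℕ) (e : ι₀ → List ι₁) (x : List ι₁),
    Function.Injective e ∧ (∀ u, (e u).length = k) ∧ x.length < k ∧
    (∀ u v, u ≠ v → Inc (e u) (e v) (ε (u, v))) ∧
    ∀ u, Inc (e u) x (ε (u, u))

/-- A complete subtree of `ι^{<ω}`. -/
def IsCompleteSubtree {ι : Type} (T : Set (List ι)) : Prop :=
  ∃ φ : List ι → List ι, Function.Injective φ ∧ Set.range φ = T ∧
    ∀ (s t : List ι) (u : ι), (s ++ [u]) <+: t → (φ s ++ [u]) <+: φ t

/-- `pbranch(f)`: those `k < n` attained by `f` only on the diagonal. -/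
def pbranch {ι : Type} {n : ℕ} (f : ι × ι → Option (Fin n)) : Set (Fin n) :=
  {k | ∀ u v, f (u, v) = some k → u = v}

/-- `k` is `f`-attached to `l`. -/
def Attached {ι : Type} {n : ℕ} (f : ι × ι → Option (Fin n)) (k l : Option (Fin n)) : Prop :=
  ∀ u v, u ≠ v → f (u, v) = k → f (v, u) = l

/-- `f` is `ψ`-branch-reduced. -/
def BranchReduced {ι : Type} {n : ℕ} (f : ι × ι → Option (Fin n)) (A : Set (Fin n))
    (ψ : Fin n → Fin n → Option (Fin n)) : Prop :=
  ∀ (u v : ι) (a b : Fin n), f (u, u) = some a → f (v, v) = some b →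
    a ∈ A → b ∈ A → a ≠ b → f (u, v) = ψ a b

/-! ### Restrictions and clovers -/

/-- The restriction `I|_a` of an ideal on `N` to `a ⊆ N`, as an ideal on `↥a`. -/
def restrictIdeal {N : Type} (I : Set (Set N)) (a : Set N) : Set (Set ↥a) :=
  {y | ∃ x ∈ I, y = Subtype.val ⁻¹' x}

/-- A clover. -/
def IsClover {N : Type} {n : ℕ} (Γ : Fin n → Set (Set N)) : Prop :=
  ¬ ∃ (a : Set N) (B : Set (Fin n)) (i : Fin n), i ∉ B ∧ a ∈ perp (Γ i) ∧
      IsGapFam fun j : ↥B => restrictIdeal (Γ j) a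

/-! ### n-types -/

/-- The minimum of a set of `Fin n`, as an `Option`. -/
noncomputable def setMin {n : ℕ} (s : Set (Fin n)) : Option (Fin n) :=
  if h : s.Nonempty then some ((Set.toFinite s).toFinset.min' ((Set.Finite.toFinset_nonempty _).mpr h)) else none

/-- The maximum of a set of `Fin n`, as an `Option`. -/
noncomputable def setMax {n : ℕ} (s : Set (Fin n)) : Option (Fin n) :=
  if h : s.Nonempty then some ((Set.toFinite s).toFinset.max' ((Set.Finite.toFinset_nonempty _).mpr h)) else none

/-- An `n`-type: a partition `n = A ∪ B ∪ C ∪ D ∪ E` (encoded by the labelling `part`,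
with `A = part⁻¹ 0`, …, `E = part⁻¹ 4`), a map `ψ` defined on pairs of distinct elements
of `A` with values in `B ∪ {∞}` covering `B` (normalized to `none` off its domain),
a partition `P` of `C` into sets of cardinality 1 or 2, and a map `γ : D → B ∪ E ∪ {∞}`
(normalized to `none` off `D`) with fibers over `E` of cardinality at least 2;
moreover if `A = ∅` then `B = D = E = ∅` and all members of `P` have cardinality 2. -/
structure NType (n : ℕ) where
  part : Fin n → Fin 5
  psi : Fin n → Fin n → Option (Fin n)
  P : Set (Set (Fin n))
  gam : Fin n → Option (Fin n)
  psi_dom : ∀ i j, ¬(part i = 0 ∧ part j = 0 ∧ i ≠ j) → psi i j = none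
  psi_mem : ∀ i j b, part i = 0 → part j = 0 → i ≠ j → psi i j = some b → part b = 1
  psi_surj : ∀ b, part b = 1 → ∃ i j, part i = 0 ∧ part j = 0 ∧ i ≠ j ∧ psi i j = some b
  P_sub : ∀ p ∈ P, ∀ k ∈ p, part k = 2
  P_cover : ∀ k, part k = 2 → ∃ p ∈ P, k ∈ p
  P_disj : ∀ p ∈ P, ∀ q ∈ P, p ≠ q → Disjoint p q
  P_card : ∀ p ∈ P, p.ncard = 1 ∨ p.ncard = 2
  gam_dom : ∀ k, part k ≠ 3 → gam k = none
  gam_mem : ∀ k b, part k = 3 → gam k = some b → part b = 1 ∨ part b = 4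
  gam_fiber : ∀ b, part b = 4 → 2 ≤ {k | part k = 3 ∧ gam k = some b}.ncard
  A_empty : (∀ i, part i ≠ 0) → (∀ i, part i = 2) ∧ ∀ p ∈ P, p.ncard = 2

/-- The index set `M = A* ∪ P ∪ D` associated to an `n`-type, where `A* = A`
if `A ≠ ∅` and `A*` is a single extra point (`root`) if `A = ∅`. -/
inductive NType.Idx {n : ℕ} (α : NType n) : Type
  | ofA (i : Fin n) (h : α.part i = 0) : NType.Idx α
  | root (h : ∀ i, α.part i ≠ 0) : NType.Idx α
  | ofP (s : Set (Fin n)) (h : s ∈ α.P) : NType.Idx α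
  | ofD (i : Fin n) (h : α.part i = 3) : NType.Idx α

/-- Whether an element of `M` belongs to `A*`. -/
def NType.Idx.isAst {n : ℕ} {α : NType n} : α.Idx → Prop
  | .ofA _ _ => True
  | .root _ => True
  | .ofP _ _ => False
  | .ofD _ _ => False

/-- The map `σ : M → n`: the identity on `A* ∪ D` and the minimum on members of `P`. -/
noncomputable def NType.sigma {n : ℕ} (α : NType n) : α.Idx → Option (Fin n)
  | .ofA i _ => some i
  | .root _ => if h : 0 < n then some ⟨0, h⟩ else none
  | .ofP s _ => setMin s
  | .ofD i _ => some i

/-- The map `τ`: `γ` on `D` and the maximum on members of `P` (junk elsewhere). -/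
noncomputable def NType.tau {n : ℕ} (α : NType n) : α.Idx → Option (Fin n)
  | .ofA i _ => some i
  | .root _ => none
  | .ofP s _ => setMax s
  | .ofD i _ => α.gam i

open Classical in
/-- The function `f^α : M × M → n ∪ {∞}` associated to an `n`-type `α`. -/
noncomputable def NType.fA {n : ℕ} (α : NType n) (q : α.Idx × α.Idx) : Option (Fin n) :=
  if q.1 = q.2 then α.sigma q.1
  else
    match q.1, q.2 with
    | .ofA i' _, .ofA j' _ => α.psi i' j'
    | i, j =>
      if i.isAst then α.tau j
      else if j.isAst then α.sigma i
      else if ∃ si sj, α.sigma i = some si ∧ α.sigma j = some sj ∧ si < sj then α.sigma i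
      else α.tau j
/-- Every infinite subset of `m^{<ω}` contains an infinite subset which is a
`(u,v)`-comb for some pair `(u,v)`. -/
theorem density_of_combs (m : ℕ) (x : Set (List (Fin m))) (hx : x.Infinite) :
    ∃ x' ⊆ x, x'.Infinite ∧ ∃ u v : Fin m, IsComb u v x' := by
  classical
  have hm : 0 < m := by
    by_contra h
    push_neg at h
    have hm0 : m = 0 := by omega
    subst hm0
    refine hx (Set.Finite.subset (Set.finite_singleton []) ?_)
    intro a _
    cases a with
    | nil => rfl
    | cons hd tl => exact hd.elim0
  -- the tree of nodes with infinitely many extensions in x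
  set T : Set (List (Fin m)) := {s | {a | a ∈ x ∧ s <+: a}.Infinite} with hTdef
  have hT : ∀ s ∈ T, ∃ u : Fin m, (s ++ [u]) ∈ T := by
    intro s hs
    by_contra h
    push_neg at h
    have hfin : ∀ u : Fin m, {a | a ∈ x ∧ (s ++ [u]) <+: a}.Finite := by
      intro u
      exact Set.not_infinite.mp (h u)
    have hsub : {a | a ∈ x ∧ s <+: a} ⊆
        insert s (⋃ u : Fin m, {a | a ∈ x ∧ (s ++ [u]) <+: a}) := by
      rintro a ⟨hax, r, hr⟩
      cases r with
      | nil => left; simp at hr; exact hr.symm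
      | cons u r' =>
        right
        refine Set.mem_iUnion.mpr ⟨u, hax, r', ?_⟩
        rw [← hr]; simp
    exact hs (((Set.finite_iUnion hfin).insert s).subset hsub)
  -- build an infinite branch through T
  let step : List (Fin m) → List (Fin m) := fun s =>
    if h : s ∈ T then s ++ [Classical.choose (hT s h)] else s
  let c : ℕ → List (Fin m) := fun k => step^[k] []
  have hc0 : c 0 = [] := rfl
  have hcstep : ∀ k, c (k + 1) = step (c k) := by
    intro k
    simp only [c, Function.iterate_succ_apply']
  have hcT : ∀ k, c k ∈ T := by
    intro k
    induction k with
    | zero =>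
      show ({a | a ∈ x ∧ [] <+: a}).Infinite
      have : {a | a ∈ x ∧ [] <+: a} = x := by
        ext a; simp [List.nil_prefix]
      rw [this]; exact hx
    | succ k ih =>
      rw [hcstep k]
      simp only [step, dif_pos ih]
      exact Classical.choose_spec (hT (c k) ih)
  let b : ℕ → Fin m := fun k => Classical.choose (hT (c k) (hcT k))
  have hcsucc : ∀ k, c (k + 1) = c k ++ [b k] := by
    intro k
    rw [hcstep k]
    simp only [step, dif_pos (hcT k)]
    rfl
  have hclen : ∀ k, (c k).length = k := by
    intro k
    induction k with
    | zero => rfl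
    | succ k ih => rw [hcsucc k]; simp [ih]
  have hcmono : ∀ k l, k ≤ l → c k <+: c l := by
    intro k l hkl
    induction l with
    | zero =>
      have : k = 0 := by omega
      subst this; exact List.prefix_refl _
    | succ l ih =>
      rcases Nat.lt_or_ge k (l + 1) with h | h
      · have := ih (by omega)
        rw [hcsucc l]
        exact this.trans (List.prefix_append _ _)
      · have : k = l + 1 := by omega
        subst this; exact List.prefix_refl _
  have hstepp : ∀ j l, j < l → (c j ++ [b j]) <+: c l := by
    intro j l hjl
    rw [← hcsucc j]
    exact hcmono (j + 1) l hjl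
  by_cases hbr : (x ∩ Set.range c).Infinite
  · -- Case 1 : infinitely many elements of x on the branch ⇒ a chain
    obtain ⟨u, hu⟩ : ∃ u : Fin m, {k | c k ∈ x ∧ b k = u}.Infinite := by
      by_contra h
      push_neg at h
      have hK : {k | c k ∈ x}.Infinite := by
        intro hKfin
        apply hbr
        have hsub : x ∩ Set.range c ⊆ c '' {k | c k ∈ x} := by
          rintro a ⟨hax, k, rfl⟩
          exact ⟨k, hax, rfl⟩
        exact (hKfin.image c).subset hsub
      apply hK
      have hsub : {k | c k ∈ x} ⊆ ⋃ u : Fin m, {k | c k ∈ x ∧ b k = u} :=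
        fun k hk => Set.mem_iUnion.mpr ⟨b k, hk, rfl⟩
      exact (Set.finite_iUnion (fun u => h u)).subset hsub
    set p : ℕ → Prop := fun k => c k ∈ x ∧ b k = u with hpdef
    have hp : (setOf p).Infinite := hu
    have hmem : ∀ q, c (Nat.nth p q) ∈ x ∧ b (Nat.nth p q) = u :=
      fun q => Nat.nth_mem_of_infinite hp q
    refine ⟨Set.range (fun q => c (Nat.nth p q)), ?_, ?_, u, u, ?_⟩
    · rintro _ ⟨q, rfl⟩
      exact (hmem q).1
    · apply Set.infinite_range_of_injective
      intro a b hab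
      have := congrArg List.length hab
      simp only [hclen] at this
      exact Nat.nth_injective hp this
    · refine Or.inl ⟨rfl, fun q => c (Nat.nth p q), rfl, ?_⟩
      intro k
      have hlt : Nat.nth p k < Nat.nth p (k + 1) := (Nat.nth_lt_nth hp).mpr (by omega)
      have := hstepp (Nat.nth p k) (Nat.nth p (k + 1)) hlt
      rwa [(hmem k).2] at this
  · -- Case 2 : finitely many elements of x on the branch ⇒ a comb
    have hbrfin : (x ∩ Set.range c).Finite := Set.not_infinite.mp hbr
    have key : ∀ k, ∃ (t : List (Fin m)) (j : ℕ) (v : Fin m), t ∈ x ∧ k ≤ j ∧ v ≠ b j ∧ (c j ++ [v]) <+: t := by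
      intro k
      have hSk : ({a | a ∈ x ∧ c k <+: a}).Infinite := hcT k
      obtain ⟨t, ⟨htx, htpre⟩, htnr⟩ :
          ∃ t, (t ∈ x ∧ c k <+: t) ∧ t ∉ x ∩ Set.range c :=
        (hSk.diff hbrfin).nonempty
      have htnr' : t ∉ Set.range c := fun h => htnr ⟨htx, h⟩
      set F : Finset ℕ := (Finset.range (t.length + 1)).filter (fun j => c j <+: t) with hF
      have hkF : k ∈ F := by
        simp only [hF, Finset.mem_filter, Finset.mem_range]
        refine ⟨?_, htpre⟩
        have := htpre.length_le
        rw [hclen] at this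
        omega
      have hFne : F.Nonempty := ⟨k, hkF⟩
      set j := F.max' hFne with hj
      have hjF : j ∈ F := F.max'_mem hFne
      have hjpre : c j <+: t := (Finset.mem_filter.mp hjF).2
      have hkj : k ≤ j := F.le_max' k hkF
      obtain ⟨r, hr⟩ := hjpre
      cases r with
      | nil =>
        exfalso
        apply htnr'
        exact ⟨j, by simpa using hr⟩
      | cons v r' =>
        have hpre' : (c j ++ [v]) <+: t := ⟨r', by rw [← List.append_cons]; exact hr⟩
        refine ⟨t, j, v, htx, hkj, ?_, hpre'⟩
        intro hvb
        have hcj1 : c (j + 1) <+: t := by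
          rw [hcsucc j, ← hvb]
          exact hpre'
        have hmemF : j + 1 ∈ F := by
          simp only [hF, Finset.mem_filter, Finset.mem_range]
          refine ⟨?_, hcj1⟩
          have := hcj1.length_le
          rw [hclen] at this
          omega
        have := F.le_max' (j + 1) hmemF
        omega
    choose t j v htx hkj hvb hpre using key
    let I : ℕ → ℕ := fun r => Nat.rec 0 (fun _ prev => (t prev).length + 1) r
    have hIsucc : ∀ r, I (r + 1) = (t (I r)).length + 1 := fun r => rfl
    have hjlen : ∀ k, j k + 1 ≤ (t k).length := by
      intro k
      have := (hpre k).length_le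
      simpa [hclen] using this
    have hjltI : ∀ r, j (I r) < I (r + 1) := by
      intro r
      have := hjlen (I r)
      rw [hIsucc r]
      omega
    have hImono : StrictMono I := by
      apply strictMono_nat_of_lt_succ
      intro r
      have h1 := hkj (I r)
      have h2 := hjltI r
      omega
    have hJmono : StrictMono (fun r => j (I r)) := by
      apply strictMono_nat_of_lt_succ
      intro r
      have h1 := hjltI r
      have h2 := hkj (I (r + 1))
      omega
    obtain ⟨⟨v₀, u₀⟩, hfib⟩ :
        ∃ q : Fin m × Fin m, {r | v (I r) = q.1 ∧ b (j (I r)) = q.2}.Infinite := by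
      by_contra h
      push_neg at h
      have hsub : (Set.univ : Set ℕ) ⊆
          ⋃ q : Fin m × Fin m, {r | v (I r) = q.1 ∧ b (j (I r)) = q.2} :=
        fun r _ => Set.mem_iUnion.mpr ⟨(v (I r), b (j (I r))), rfl, rfl⟩
      exact Set.infinite_univ
        ((Set.finite_iUnion (fun q => h q)).subset hsub)
    set p : ℕ → Prop := fun r => v (I r) = v₀ ∧ b (j (I r)) = u₀ with hpdef
    have hp : (setOf p).Infinite := hfib
    have hmem : ∀ q, v (I (Nat.nth p q)) = v₀ ∧ b (j (I (Nat.nth p q))) = u₀ :=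
      fun q => Nat.nth_mem_of_infinite hp q
    have hnmono : StrictMono (Nat.nth p) := fun a b hab => (Nat.nth_lt_nth hp).mpr hab
    let tq : ℕ → List (Fin m) := fun q => t (I (Nat.nth p q))
    let sq : ℕ → List (Fin m) := fun q => c (j (I (Nat.nth p q)))
    have hslen : ∀ q, (sq q).length = j (I (Nat.nth p q)) := fun q => hclen _
    have hchain : ∀ q, (sq q ++ [u₀]) <+: sq (q + 1) := by
      intro q
      have hlt : j (I (Nat.nth p q)) < j (I (Nat.nth p (q + 1))) :=
        hJmono (hnmono (by omega))
      have := hstepp _ _ hlt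
      rwa [(hmem q).2] at this
    have hcomb : ∀ q, (sq q ++ [v₀]) <+: tq q := by
      intro q
      have := hpre (I (Nat.nth p q))
      rwa [(hmem q).1] at this
    have hlenlt : ∀ q, (tq q).length < (sq (q + 1)).length := by
      intro q
      rw [hslen (q + 1)]
      have h1 : (tq q).length < I (Nat.nth p q + 1) := by
        rw [hIsucc]; simp only [tq]; omega
      have h2 : I (Nat.nth p q + 1) ≤ I (Nat.nth p (q + 1)) :=
        hImono.monotone (hnmono (by omega))
      have h3 := hkj (I (Nat.nth p (q + 1)))
      omega
    have htqlen : ∀ q, (tq q).length < (tq (q + 1)).length := by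
      intro q
      have h1 := hlenlt q
      have h2 : (sq (q + 1)).length < (tq (q + 1)).length := by
        have := (hcomb (q + 1)).length_le
        simp only [List.length_append, List.length_cons, List.length_nil] at this
        omega
      omega
    have htqsm : StrictMono (fun q => (tq q).length) := strictMono_nat_of_lt_succ htqlen
    refine ⟨Set.range tq, ?_, ?_, u₀, v₀, ?_⟩
    · rintro _ ⟨q, rfl⟩
      exact htx _
    · apply Set.infinite_range_of_injective
      intro a b hab
      exact htqsm.injective (congrArg List.length hab)
    · have hne : u₀ ≠ v₀ := by
        have := hvb (I (Nat.nth p 0))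
        rw [(hmem 0).1, (hmem 0).2] at this
        exact fun h => this h.symm
      exact Or.inr ⟨hne, tq, sq, rfl, hchain, hcomb, hlenlt⟩
end

section
/- For every function f : m × m → n ∪ {∞}: Γ_f(∞) ⊆ Γ_f^⊥, and Γ_f(∞) is dense in Γ_f^⊥, i.e. for every infinite x ∈ Γ_f^⊥ there exists an infinite x' ⊆ x with x' ∈ Γ_f(∞). Consequently, Γ_f^⊥ consists only of finite sets if and only if ∞ is not in the range of f. -/
open Classical

section Aux

variable {α : Type}

lemma eq_prefix_len {a b c : List α} (h1 : a <+: c) (h2 : b <+: c)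
    (h : a.length = b.length) : a = b :=
  (List.prefix_of_prefix_length_le h1 h2 h.le).eq_of_length h

lemma snoc_prefix_eq {r : List α} {u v : α} {y : List α}
    (h1 : (r ++ [u]) <+: y) (h2 : (r ++ [v]) <+: y) : u = v := by
  have h := eq_prefix_len h1 h2 (by simp)
  simpa using List.append_cancel_left h

lemma prefix_snoc_of_prefix_ne {r x : List α} (h : r <+: x) (hne : x ≠ r) :
    ∃ u, (r ++ [u]) <+: x := by
  obtain ⟨d, rfl⟩ := h
  cases d with
  | nil => simp at hne
  | cons u d' => exact ⟨u, ⟨d', by simp⟩⟩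

lemma chain_prefix_mono {u : α} {s : ℕ → List α} (hs : ∀ k, (s k ++ [u]) <+: s (k + 1)) :
    ∀ {k l : ℕ}, k ≤ l → s k <+: s l := by
  intro k l h
  induction h with
  | refl => exact List.prefix_refl _
  | step h ih => exact ih.trans (((s _).prefix_append [u]).trans (hs _))

lemma chain_snoc_prefix {u : α} {s : ℕ → List α} (hs : ∀ k, (s k ++ [u]) <+: s (k + 1))
    {k l : ℕ} (h : k < l) : (s k ++ [u]) <+: s l :=
  (hs k).trans (chain_prefix_mono hs h)

lemma chain_len_lt {u : α} {s : ℕ → List α} (hs : ∀ k, (s k ++ [u]) <+: s (k + 1))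
    {k l : ℕ} (h : k < l) : (s k).length < (s l).length := by
  have := (chain_snoc_prefix hs h).length_le
  simp at this; omega

lemma comb_t_len_lt {u v : α} {t s : ℕ → List α}
    (hs : ∀ k, (s k ++ [u]) <+: s (k + 1))
    (hts : ∀ k, (s k ++ [v]) <+: t k)
    (hlen : ∀ k, (t k).length < (s (k + 1)).length)
    {k l : ℕ} (h : k < l) : (t k).length < (t l).length := by
  have h1 : (s (k+1)).length ≤ (s l).length := by
    rcases Nat.lt_or_ge (k+1) l with h' | h'
    · exact (chain_len_lt hs h').le
    · have : k + 1 = l := by omega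
      simp [this]
  have h2 : (s l).length < (t l).length := by
    have := (hts l).length_le; simp at this; omega
  have := hlen k
  omega

/-- key: pair structure of two elements of a comb, ordered by length -/
lemma comb_pair {u v : α} {c : Set (List α)} (h : IsComb u v c) {x y : List α}
    (hx : x ∈ c) (hy : y ∈ c) (hxy : x.length < y.length) :
    (u = v ∧ (x ++ [u]) <+: y) ∨ (u ≠ v ∧ ∃ r, (r ++ [v]) <+: x ∧ (r ++ [u]) <+: y) := by
  rcases h with ⟨huv, s, rfl, hs⟩ | ⟨huv, t, s, rfl, hs, hts, hlen⟩
  · left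
    obtain ⟨k, rfl⟩ := hx; obtain ⟨l, rfl⟩ := hy
    have hkl : k < l := by
      by_contra h'
      push_neg at h'
      rcases Nat.lt_or_ge l k with h'' | h''
      · exact absurd (chain_len_lt hs h'') (by omega)
      · have : l = k := by omega
        subst this; omega
    exact ⟨huv, chain_snoc_prefix hs hkl⟩
  · right
    obtain ⟨k, rfl⟩ := hx; obtain ⟨l, rfl⟩ := hy
    have hkl : k < l := by
      by_contra h'
      push_neg at h'
      rcases Nat.lt_or_ge l k with h'' | h''
      · exact absurd (comb_t_len_lt hs hts hlen h'') (by omega)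
      · have : l = k := by omega
        subst this; omega
    refine ⟨huv, s k, hts k, ?_⟩
    have h1 : (s k ++ [u]) <+: s l := chain_snoc_prefix hs hkl
    exact h1.trans (((s l).prefix_append [v]).trans (hts l))

lemma comb_elem_len_inj {u v : α} {c : Set (List α)} (h : IsComb u v c) {x y : List α}
    (hx : x ∈ c) (hy : y ∈ c) (hl : x.length = y.length) : x = y := by
  rcases h with ⟨huv, s, rfl, hs⟩ | ⟨huv, t, s, rfl, hs, hts, hlen⟩
  · obtain ⟨k, rfl⟩ := hx; obtain ⟨l, rfl⟩ := hy
    rcases Nat.lt_trichotomy k l with h' | h' | h'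
    · exact absurd (chain_len_lt hs h') (by omega)
    · rw [h']
    · exact absurd (chain_len_lt hs h') (by omega)
  · obtain ⟨k, rfl⟩ := hx; obtain ⟨l, rfl⟩ := hy
    rcases Nat.lt_trichotomy k l with h' | h' | h'
    · exact absurd (comb_t_len_lt hs hts hlen h') (by omega)
    · rw [h']
    · exact absurd (comb_t_len_lt hs hts hlen h') (by omega)

lemma comb_infinite {u v : α} {c : Set (List α)} (h : IsComb u v c) : c.Infinite := by
  rcases h with ⟨huv, s, rfl, hs⟩ | ⟨huv, t, s, rfl, hs, hts, hlen⟩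
  · exact Set.infinite_range_of_injective fun k l hkl => by
      rcases Nat.lt_trichotomy k l with h' | h' | h'
      · exact absurd (chain_len_lt hs h') (by rw [hkl]; omega)
      · exact h'
      · exact absurd (chain_len_lt hs h') (by rw [hkl]; omega)
  · exact Set.infinite_range_of_injective fun k l hkl => by
      rcases Nat.lt_trichotomy k l with h' | h' | h'
      · exact absurd (comb_t_len_lt hs hts hlen h') (by rw [hkl]; omega)
      · exact h'
      · exact absurd (comb_t_len_lt hs hts hlen h') (by rw [hkl]; omega)

lemma comb_cross_aux {u v u' v' : α} {x y : List α} (hlen : x.length < y.length)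
    (h1 : (u = v ∧ (x ++ [u]) <+: y) ∨ (u ≠ v ∧ ∃ r, (r ++ [v]) <+: x ∧ (r ++ [u]) <+: y))
    (h2 : (u' = v' ∧ (x ++ [u']) <+: y) ∨
      (u' ≠ v' ∧ ∃ r, (r ++ [v']) <+: x ∧ (r ++ [u']) <+: y)) :
    u = u' ∧ v = v' := by
  rcases h1 with ⟨he, hp⟩ | ⟨hne, r, hrx, hry⟩
  · rcases h2 with ⟨he', hp'⟩ | ⟨hne', r', hrx', hry'⟩
    · have := snoc_prefix_eq hp hp'
      exact ⟨this, by rw [← he, ← he', this]⟩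
    · -- chain vs comb: contradiction
      exfalso
      have hxy : x <+: y := ((x.prefix_append [u]).trans hp)
      have : (r' ++ [v']) <+: y := hrx'.trans hxy
      exact hne' (snoc_prefix_eq hry' this)
  · rcases h2 with ⟨he', hp'⟩ | ⟨hne', r', hrx', hry'⟩
    · exfalso
      have hxy : x <+: y := ((x.prefix_append [u']).trans hp')
      have : (r ++ [v]) <+: y := hrx.trans hxy
      exact hne (snoc_prefix_eq hry this)
    · -- both combs
      rcases Nat.lt_trichotomy r.length r'.length with hl | hl | hl
      · exfalso
        have hr'x : r' <+: x := (r'.prefix_append [v']).trans hrx'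
        have hr'y : r' <+: y := (r'.prefix_append [u']).trans hry'
        have h1 : (r ++ [v]) <+: r' := List.prefix_of_prefix_length_le hrx hr'x (by simp; omega)
        have h2 : (r ++ [u]) <+: r' := List.prefix_of_prefix_length_le hry hr'y (by simp; omega)
        exact hne (snoc_prefix_eq h2 h1)
      · have e1 : r ++ [v] = r' ++ [v'] := eq_prefix_len hrx hrx' (by simp [hl])
        have e2 : r ++ [u] = r' ++ [u'] := eq_prefix_len hry hry' (by simp [hl])
        have := List.append_inj e1 (by omega)
        have h2 := List.append_inj e2 (by omega)
        refine ⟨by simpa using h2.2, by simpa using this.2⟩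
      · exfalso
        have hrx2 : r <+: x := (r.prefix_append [v]).trans hrx
        have hry2 : r <+: y := (r.prefix_append [u]).trans hry
        have h1 : (r' ++ [v']) <+: r := List.prefix_of_prefix_length_le hrx' hrx2 (by simp; omega)
        have h2 : (r' ++ [u']) <+: r := List.prefix_of_prefix_length_le hry' hry2 (by simp; omega)
        exact hne' (snoc_prefix_eq h2 h1)

lemma comb_cross {u v u' v' : α} {c c' : Set (List α)} (h : IsComb u v c) (h' : IsComb u' v' c')
    (hne : (u, v) ≠ (u', v')) : (c ∩ c').Subsingleton := by
  intro x hx y hy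
  by_contra hxy
  have hlne : x.length ≠ y.length := fun hl => hxy (comb_elem_len_inj h hx.1 hy.1 hl)
  rcases Nat.lt_or_ge x.length y.length with hl | hl
  · have := comb_cross_aux hl (comb_pair h hx.1 hy.1 hl) (comb_pair h' hx.2 hy.2 hl)
    exact hne (by rw [this.1, this.2])
  · have hl' : y.length < x.length := by omega
    have := comb_cross_aux hl' (comb_pair h hy.1 hx.1 hl') (comb_pair h' hy.2 hx.2 hl')
    exact hne (by rw [this.1, this.2])

end Aux

lemma combIdeal_inter_finite {m n : ℕ} (f : Fin m × Fin m → Option (Fin n))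
    {i j : Option (Fin n)} (hij : i ≠ j) {a b : Set (List (Fin m))}
    (ha : a ∈ combIdeal f i) (hb : b ∈ combIdeal f j) : (a ∩ b).Finite := by
  obtain ⟨F, hF, haF⟩ := ha
  obtain ⟨G, hG, hbG⟩ := hb
  have hsub : a ∩ b ⊆ (a \ ⋃ c ∈ F, c) ∪ (b \ ⋃ c ∈ G, c) ∪
      ⋃ c ∈ F, ⋃ c' ∈ G, (c ∩ c' : Set (List (Fin m))) := by
    intro x hx
    by_cases h1 : x ∈ ⋃ c ∈ F, c
    · by_cases h2 : x ∈ ⋃ c ∈ G, c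
      · right
        simp only [Set.mem_iUnion] at h1 h2 ⊢
        obtain ⟨c, hc, hxc⟩ := h1
        obtain ⟨c', hc', hxc'⟩ := h2
        exact ⟨c, hc, c', hc', hxc, hxc'⟩
      · exact Or.inl (Or.inr ⟨hx.2, h2⟩)
    · exact Or.inl (Or.inl ⟨hx.1, h1⟩)
  refine Set.Finite.subset ?_ hsub
  refine ((haF.union hbG).union ?_)
  refine Set.Finite.biUnion F.finite_toSet fun c hc => ?_
  refine Set.Finite.biUnion G.finite_toSet fun c' hc' => ?_
  obtain ⟨u, v, hfu, hcomb⟩ := hF c hc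
  obtain ⟨u', v', hfu', hcomb'⟩ := hG c' hc'
  refine Set.Subsingleton.finite (comb_cross hcomb hcomb' ?_)
  intro he
  rw [Prod.mk.injEq] at he
  rw [he.1, he.2, hfu'] at hfu
  exact hij hfu.symm

lemma exists_comb {m : ℕ} (u v : Fin m) : ∃ c : Set (List (Fin m)), IsComb u v c := by
  by_cases h : u = v
  · subst h
    refine ⟨_, Or.inl ⟨rfl, fun k => List.replicate k u, rfl, fun k => ?_⟩⟩
    rw [← List.replicate_succ' (n := k) (a := u)]
  · refine ⟨_, Or.inr ⟨h, fun k => List.replicate (2*k) u ++ [v],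
      fun k => List.replicate (2*k) u, rfl, fun k => ?_, fun k => List.prefix_refl _,
      fun k => ?_⟩⟩
    · refine ⟨[u], ?_⟩
      show List.replicate (2*k) u ++ [u] ++ [u] = List.replicate (2*(k+1)) u
      rw [show 2*(k+1) = 2*k+1+1 by omega, List.replicate_succ', List.replicate_succ']
    · simp; omega

lemma exists_comb_subset {m : ℕ} {X : Set (List (Fin m))} (hX : X.Infinite) :
    ∃ u v c, IsComb u v c ∧ c ⊆ X ∧ c.Infinite := by
  classical
  set B : Set (List (Fin m)) := {r | (X ∩ {x | r <+: x}).Infinite} with hB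
  have h0 : ([] : List (Fin m)) ∈ B := by
    have : (X ∩ {x | ([] : List (Fin m)) <+: x}) = X := by
      ext x; simp
    simpa [hB, this] using hX
  have hstep : ∀ r ∈ B, ∃ u, r ++ [u] ∈ B := by
    intro r hr
    by_contra hcon
    push_neg at hcon
    have hfin : ∀ u : Fin m, (X ∩ {x | (r ++ [u]) <+: x}).Finite := by
      intro u
      have := hcon u
      rwa [hB, Set.mem_setOf_eq, Set.not_infinite] at this
    have hsub : (X ∩ {x | r <+: x}) ⊆
        insert r (⋃ u : Fin m, (X ∩ {x | (r ++ [u]) <+: x})) := by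
      intro x hx
      by_cases hxr : x = r
      · exact Or.inl hxr
      · obtain ⟨u, hu⟩ := prefix_snoc_of_prefix_ne hx.2 hxr
        exact Or.inr (Set.mem_iUnion.mpr ⟨u, hx.1, hu⟩)
    exact hr (Set.Finite.subset ((Set.finite_iUnion hfin).insert r) hsub)
  choose g hg using hstep
  set stp : {r // r ∈ B} → {r // r ∈ B} := fun p => ⟨p.1 ++ [g p.1 p.2], hg p.1 p.2⟩ with hstp
  set q : ℕ → {r // r ∈ B} := fun k => stp^[k] ⟨[], h0⟩ with hq
  set r : ℕ → List (Fin m) := fun k => (q k).1 with hr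
  have hrB : ∀ k, r k ∈ B := fun k => (q k).2
  set uu : ℕ → Fin m := fun k => g (r k) (hrB k) with huu
  have hrs : ∀ k, r (k + 1) = r k ++ [uu k] := by
    intro k
    have : q (k + 1) = stp (q k) := by
      rw [hq]; exact Function.iterate_succ_apply' stp k _
    rw [hr]
    simp only [this, hstp]
    rfl
  have hrlen : ∀ k, (r k).length = k := by
    intro k
    induction k with
    | zero => rfl
    | succ k ih => rw [hrs k]; simp [ih]
  have hrmono : ∀ {k l : ℕ}, k ≤ l → r k <+: r l := by
    intro k l h
    induction h with
    | refl => exact List.prefix_refl _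
    | step h ih =>
      refine ih.trans ?_
      rw [hrs _]
      exact (r _).prefix_append _
  -- infinitely many k satisfy P k
  set P : ℕ → Prop := fun k => r k ∈ X ∨ ∃ v, v ≠ uu k ∧ ∃ x ∈ X, (r k ++ [v]) <+: x with hP
  have hPinf : ∀ K, ∃ k, K ≤ k ∧ P k := by
    intro K
    by_contra hcon
    push_neg at hcon
    have key : ∀ j, ∀ x ∈ X, r K <+: x → r (K + j) <+: x := by
      intro j
      induction j with
      | zero => intro x hx h; exact h
      | succ j ih =>
        intro x hx h
        have hpre : r (K + j) <+: x := ih x hx h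
        have hnp := hcon (K + j) (by omega)
        rw [hP] at hnp
        push_neg at hnp
        have hxne : x ≠ r (K + j) := by
          intro he; exact hnp.1 (he ▸ hx)
        obtain ⟨w, hw⟩ := prefix_snoc_of_prefix_ne hpre hxne
        have hwu : w = uu (K + j) := by
          by_contra hwne
          exact absurd hw (hnp.2 w hwne x hx)
        have : K + (j + 1) = (K + j) + 1 := by omega
        rw [this, hrs (K + j), ← hwu]
        exact hw
    obtain ⟨x, hx⟩ := (hrB K).nonempty
    have := key (x.length + 1) x hx.1 hx.2
    have hle := this.length_le
    rw [hrlen] at hle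
    omega
  have hSinf : {k | P k}.Infinite := by
    refine Set.infinite_of_forall_exists_gt fun a => ?_
    obtain ⟨k, hk1, hk2⟩ := hPinf (a + 1)
    exact ⟨k, hk2, by omega⟩
  -- pigeonhole
  set Q : Fin m → Set ℕ := fun u => {k | uu k = u ∧ r k ∈ X} with hQ
  set R : Fin m → Fin m → Set ℕ :=
    fun u v => {k | uu k = u ∧ v ≠ u ∧ ∃ x ∈ X, (r k ++ [v]) <+: x} with hR
  have hcases : (∃ u, (Q u).Infinite) ∨ ∃ u v, (R u v).Infinite := by
    by_contra hcon
    push_neg at hcon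
    have hQf : ∀ u, (Q u).Finite := fun u => hcon.1 u
    have hRf : ∀ u v, (R u v).Finite := fun u v => hcon.2 u v
    have hsub : {k | P k} ⊆ (⋃ u, Q u) ∪ ⋃ u, ⋃ v, R u v := by
      intro k hk
      rcases hk with hk | ⟨v, hv, x, hx, hpre⟩
      · exact Or.inl (Set.mem_iUnion.mpr ⟨uu k, rfl, hk⟩)
      · refine Or.inr (Set.mem_iUnion.mpr ⟨uu k, Set.mem_iUnion.mpr ⟨v, rfl, hv, x, hx, hpre⟩⟩)
    exact hSinf (Set.Finite.subset ((Set.finite_iUnion hQf).union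
      (Set.finite_iUnion fun u => Set.finite_iUnion (hRf u))) hsub)
  rcases hcases with ⟨u, hQu⟩ | ⟨u, v, hRuv⟩
  · -- chain case
    have hQu' : {k | k ∈ Q u}.Infinite := by simpa using hQu
    set N : ℕ → ℕ := fun i => Nat.nth (· ∈ Q u) i with hN
    have hNmem : ∀ i, N i ∈ Q u := fun i => Nat.nth_mem_of_infinite hQu' i
    have hNlt : ∀ {i j}, i < j → N i < N j := fun {i j} h =>
      (Nat.nth_lt_nth hQu').mpr h
    set s : ℕ → List (Fin m) := fun i => r (N i) with hs
    have hchain : ∀ i, (s i ++ [u]) <+: s (i + 1) := by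
      intro i
      have h1 : r (N i + 1) = r (N i) ++ [u] := by
        rw [hrs]; rw [(hNmem i).1]
      show (r (N i) ++ [u]) <+: r (N (i + 1))
      rw [← h1]
      exact hrmono (by have := hNlt (show i < i + 1 by omega); omega)
    refine ⟨u, u, Set.range s, Or.inl ⟨rfl, s, rfl, hchain⟩, ?_, ?_⟩
    · rintro x ⟨i, rfl⟩
      exact (hNmem i).2
    · refine Set.infinite_range_of_injective fun i j hij => ?_
      by_contra hne
      rcases Nat.lt_or_ge i j with h' | h'
      · have := chain_len_lt hchain h'; rw [hij] at this; omega
      · have h'' : j < i := by omega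
        have := chain_len_lt hchain h''; rw [hij] at this; omega
  · -- comb case
    have hvu : v ≠ u := by
      obtain ⟨k, hk⟩ := hRuv.nonempty
      exact hk.2.1
    have hWex : ∀ k, k ∈ R u v → ∃ x, x ∈ X ∧ (r k ++ [v]) <+: x := by
      intro k hk
      obtain ⟨x, hx1, hx2⟩ := hk.2.2
      exact ⟨x, hx1, hx2⟩
    choose! W hW1 hW2 using hWex
    have hnxt : ∀ a : ℕ, ∃ b, b ∈ R u v ∧ a < b := by
      intro a
      obtain ⟨b, hb1, hb2⟩ := hRuv.exists_gt a
      exact ⟨b, hb1, hb2⟩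
    choose nxt hnxt1 hnxt2 using hnxt
    set k : ℕ → ℕ := fun i => (fun a => nxt (W a).length)^[i] (nxt 0) with hk
    have hkstep : ∀ i, k (i + 1) = nxt (W (k i)).length := by
      intro i
      rw [hk]
      exact Function.iterate_succ_apply' _ i _
    have hkmem : ∀ i, k i ∈ R u v := by
      intro i
      induction i with
      | zero => exact hnxt1 0
      | succ i ih => rw [hkstep]; exact hnxt1 _
    have hksp : ∀ i, (W (k i)).length < k (i + 1) := by
      intro i
      rw [hkstep]
      exact hnxt2 _
    set s : ℕ → List (Fin m) := fun i => r (k i) with hs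
    set t : ℕ → List (Fin m) := fun i => W (k i) with ht
    have hts : ∀ i, (s i ++ [v]) <+: t i := fun i => hW2 (k i) (hkmem i)
    have htX : ∀ i, t i ∈ X := fun i => hW1 (k i) (hkmem i)
    have hslen : ∀ i, (s i).length = k i := fun i => hrlen (k i)
    have hksp' : ∀ i, (t i).length < k (i + 1) := hksp
    have htlen : ∀ i, k i + 1 ≤ (t i).length := by
      intro i
      have h := (hts i).length_le
      rw [List.length_append, List.length_singleton, hslen i] at h
      omega
    have hkmono : ∀ i, k i + 1 < k (i + 1) := by
      intro i
      have h1 := htlen i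
      have h2 := hksp' i
      omega
    have hchain : ∀ i, (s i ++ [u]) <+: s (i + 1) := by
      intro i
      have h1 : r (k i + 1) = r (k i) ++ [u] := by
        rw [hrs]; rw [(hkmem i).1]
      show (r (k i) ++ [u]) <+: r (k (i + 1))
      rw [← h1]
      exact hrmono (by have := hkmono i; omega)
    have hspace : ∀ i, (t i).length < (s (i + 1)).length := by
      intro i
      rw [hslen (i + 1)]
      exact hksp' i
    refine ⟨u, v, Set.range t, Or.inr ⟨hvu.symm, t, s, rfl, hchain, hts, hspace⟩, ?_, ?_⟩
    · rintro x ⟨i, rfl⟩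
      exact htX i
    · refine Set.infinite_range_of_injective fun i j hij => ?_
      by_contra hne
      rcases Nat.lt_or_ge i j with h' | h'
      · have := comb_t_len_lt hchain hts hspace h'; rw [hij] at this; omega
      · have h'' : j < i := by omega
        have := comb_t_len_lt hchain hts hspace h''; rw [hij] at this; omega

lemma single_comb_mem {m n : ℕ} (f : Fin m × Fin m → Option (Fin n)) {u v : Fin m}
    {c : Set (List (Fin m))} (hc : IsComb u v c) {i : Option (Fin n)} (hf : f (u, v) = i) :
    c ∈ combIdeal f i := by
  refine ⟨{c}, ?_, ?_⟩
  · intro c' hc'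
    rw [Finset.mem_singleton] at hc'
    exact ⟨u, v, hf, hc' ▸ hc⟩
  · simp


/-- `Γ_f(∞)` is a dense subfamily of `Γ_f^⊥`; consequently `Γ_f^⊥` consists only of
finite sets iff `∞` is not in the range of `f`. -/
theorem gammaF_inf_dense (m n : ℕ) (f : Fin m × Fin m → Option (Fin n)) :
    combIdeal f none ⊆ perp (⋃ i, GammaF f i) ∧
    (∀ x ∈ perp (⋃ i, GammaF f i), x.Infinite →
      ∃ x' ⊆ x, x'.Infinite ∧ x' ∈ combIdeal f none) ∧
    ((∀ a ∈ perp (⋃ i, GammaF f i), a.Finite) ↔ ∀ p, f p ≠ none) := by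
  have main1 : combIdeal f none ⊆ perp (⋃ i, GammaF f i) := by
    intro a ha b hb
    rw [Set.mem_iUnion] at hb
    obtain ⟨i, hb⟩ := hb
    exact combIdeal_inter_finite f (by simp) ha hb
  have contra : ∀ a ∈ perp (⋃ i, GammaF f i), ∀ u v (c : Set (List (Fin m))),
      IsComb u v c → c ⊆ a → f (u, v) = none := by
    intro a ha u v c hc hca
    rcases hfo : f (u, v) with _ | i
    · rfl
    · exfalso
      have hmem : c ∈ ⋃ i, GammaF f i := Set.mem_iUnion.mpr ⟨i, single_comb_mem f hc hfo⟩
      have hfin : (a ∩ c).Finite := ha c hmem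
      have : a ∩ c = c := Set.inter_eq_self_of_subset_right hca
      rw [this] at hfin
      exact comb_infinite hc hfin
  refine ⟨main1, ?_, ?_⟩
  · intro x hx hxinf
    obtain ⟨u, v, c, hc, hcx, hcinf⟩ := exists_comb_subset hxinf
    exact ⟨c, hcx, hcinf, single_comb_mem f hc (contra x hx u v c hc hcx)⟩
  · constructor
    · intro h p hp
      obtain ⟨u, v⟩ := p
      obtain ⟨c, hc⟩ := exists_comb u v
      have := h c (main1 (single_comb_mem f hc hp))
      exact comb_infinite hc this
    · intro h a ha
      by_contra hfin
      obtain ⟨u, v, c, hc, hca, hcinf⟩ := exists_comb_subset hfin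
      exact h (u, v) (contra a ha u v c hc hca)
end
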